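/- Let v : R^3 → R satisfy |v(y)| ≤ C ⟨y⟩^{-β} with β > 3. Then there is a constant C' such that for every n ≥ 1 and every x ∈ R^3, the iterated integral ∫_{R^{3n}} (∏_{j=1}^n |v(y_j)|) / (∏_{j=1}^n |y_j - y_{j-1}|) dy_1⋯dy_n ≤ (C')^n ⟨x⟩^{-1}, where y_0 = x. -/

import Mathlib

open MeasureTheory Metric Set ENNReal

noncomputable abbrev E3 := EuclideanSpace ℝ (Fin 3)


noncomputable def cB : ℝ := 2 * (volume (ball (0:E3) 1)).toReal

lemma cB_pos : 0 < cB := by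
  have h1 : (0:ℝ≥0∞) < volume (ball (0:E3) 1) := measure_ball_pos _ _ one_pos
  have h2 : volume (ball (0:E3) 1) ≠ ⊤ := measure_ball_lt_top.ne
  have := ENNReal.toReal_pos h1.ne' h2
  unfold cB; linarith

lemma ball_lintegral (x : E3) {R : ℝ} (hR : 0 < R) :
    ∫⁻ y in ball x R, ENNReal.ofReal ‖y - x‖⁻¹ ≤ ENNReal.ofReal (cB * R^2) := by
  set B := volume (ball (0:E3) 1) with hBdef
  have hB : B ≠ ⊤ := measure_ball_lt_top.ne
  have hmeas : AEMeasurable (fun y : E3 => ‖y - x‖⁻¹) (volume.restrict (ball x R)) := by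
    fun_prop
  rw [lintegral_eq_lintegral_meas_le _ (Filter.Eventually.of_forall (fun y => by positivity)) hmeas]
  have hsplit : Ioi (0:ℝ) = Ioc 0 R⁻¹ ∪ Ioi R⁻¹ := (Ioc_union_Ioi_eq_Ioi (by positivity)).symm
  rw [hsplit]
  refine le_trans (lintegral_union_le _ _ _) ?_
  have piece1 : ∫⁻ t in Ioc (0:ℝ) R⁻¹, (volume.restrict (ball x R)) {a : E3 | t ≤ ‖a - x‖⁻¹}
      ≤ ENNReal.ofReal (R^3) * B * ENNReal.ofReal R⁻¹ := by
    have hb : ∀ t : ℝ, (volume.restrict (ball x R)) {a : E3 | t ≤ ‖a - x‖⁻¹}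
        ≤ ENNReal.ofReal (R^3) * B := by
      intro t
      calc (volume.restrict (ball x R)) {a : E3 | t ≤ ‖a - x‖⁻¹}
          ≤ (volume.restrict (ball x R)) univ := measure_mono (subset_univ _)
        _ = volume (ball x R) := by simp
        _ = ENNReal.ofReal (R^3) * B := by
            simpa [hBdef] using Measure.addHaar_ball (volume : Measure E3) x hR.le
    calc ∫⁻ t in Ioc (0:ℝ) R⁻¹, (volume.restrict (ball x R)) {a : E3 | t ≤ ‖a - x‖⁻¹}
        ≤ ∫⁻ _ in Ioc (0:ℝ) R⁻¹, ENNReal.ofReal (R^3) * B := lintegral_mono (fun t => hb t)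
      _ = ENNReal.ofReal (R^3) * B * volume (Ioc (0:ℝ) R⁻¹) := setLIntegral_const _ _
      _ = ENNReal.ofReal (R^3) * B * ENNReal.ofReal R⁻¹ := by rw [Real.volume_Ioc, sub_zero]
  have piece2 : ∫⁻ t in Ioi R⁻¹, (volume.restrict (ball x R)) {a : E3 | t ≤ ‖a - x‖⁻¹}
      ≤ ENNReal.ofReal (R^2/2) * B := by
    have hb : ∀ t ∈ Ioi R⁻¹, (volume.restrict (ball x R)) {a : E3 | t ≤ ‖a - x‖⁻¹}
        ≤ ENNReal.ofReal ((t⁻¹)^3) * B := by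
      intro t ht
      have ht0 : 0 < t := lt_trans (by positivity) ht
      have hsub : {a : E3 | t ≤ ‖a - x‖⁻¹} ⊆ closedBall x t⁻¹ := by
        intro a ha
        simp only [mem_setOf_eq] at ha
        have hn : 0 < ‖a - x‖ := by
          rcases eq_or_lt_of_le (norm_nonneg (a - x)) with h | h
          · exfalso; rw [← h] at ha; simp at ha; linarith
          · exact h
        have : ‖a - x‖ ≤ t⁻¹ := by
          rw [← inv_inv t] at ha ⊢
          exact le_inv_of_le_inv₀ (by positivity) ha
        simpa [mem_closedBall, dist_eq_norm] using this
      calc (volume.restrict (ball x R)) {a : E3 | t ≤ ‖a - x‖⁻¹}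
          ≤ volume {a : E3 | t ≤ ‖a - x‖⁻¹} := Measure.restrict_le_self _
        _ ≤ volume (closedBall x t⁻¹) := measure_mono hsub
        _ = ENNReal.ofReal ((t⁻¹)^3) * B := by
            simpa [hBdef] using Measure.addHaar_closedBall (volume : Measure E3) x (by positivity : (0:ℝ) ≤ t⁻¹)
    calc ∫⁻ t in Ioi R⁻¹, (volume.restrict (ball x R)) {a : E3 | t ≤ ‖a - x‖⁻¹}
        ≤ ∫⁻ t in Ioi R⁻¹, ENNReal.ofReal ((t⁻¹)^3) * B := by
          refine setLIntegral_mono' measurableSet_Ioi hb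
      _ = (∫⁻ t in Ioi R⁻¹, ENNReal.ofReal ((t⁻¹)^3)) * B := lintegral_mul_const' B _ hB
      _ = ENNReal.ofReal (R^2/2) * B := by
          congr 1
          have heq : ∀ t ∈ Ioi R⁻¹, ENNReal.ofReal ((t⁻¹)^3) = ENNReal.ofReal (t ^ (-3:ℝ)) := by
            intro t ht
            have ht0 : 0 < t := lt_trans (by positivity) ht
            congr 1
            rw [inv_pow, ← Real.rpow_natCast t 3, ← Real.rpow_neg ht0.le]
            norm_num
          rw [setLIntegral_congr_fun measurableSet_Ioi heq]
          have hint := integrableOn_Ioi_rpow_of_lt (by norm_num : (-3:ℝ) < -1) (by positivity : (0:ℝ) < R⁻¹)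
          rw [← ofReal_integral_eq_lintegral_ofReal hint
            ((ae_restrict_iff' measurableSet_Ioi).2 (Filter.Eventually.of_forall
              (fun t ht => Real.rpow_nonneg (le_of_lt (lt_trans (by positivity) ht)) _)))]
          rw [integral_Ioi_rpow_of_lt (by norm_num : (-3:ℝ) < -1) (by positivity : (0:ℝ) < R⁻¹)]
          congr 1
          rw [show (-3:ℝ) + 1 = -2 by norm_num, Real.rpow_neg (by positivity : (0:ℝ) ≤ R⁻¹),
            show ((2:ℝ)) = ((2:ℕ):ℝ) by norm_num, Real.rpow_natCast, inv_pow, inv_inv]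
          ring
  refine le_trans (add_le_add piece1 piece2) ?_
  have h1 : ENNReal.ofReal (R^3) * B * ENNReal.ofReal R⁻¹
      = B * ENNReal.ofReal (R^3 * R⁻¹) := by
    rw [ENNReal.ofReal_mul (by positivity)]; ring
  have h2 : R^3 * R⁻¹ = R^2 := by field_simp
  rw [h1, h2, mul_comm (ENNReal.ofReal (R^2/2)) B, ← mul_add,
    ← ENNReal.ofReal_add (by positivity) (by positivity),
    ← ENNReal.ofReal_toReal hB, ← ENNReal.ofReal_mul ENNReal.toReal_nonneg]
  apply ENNReal.ofReal_le_ofReal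
  unfold cB
  have hb0 : (0:ℝ) ≤ (volume (ball (0:E3) 1)).toReal := ENNReal.toReal_nonneg
  nlinarith [sq_nonneg R]


lemma integrable_jap {γ : ℝ} (hγ : 3 < γ) :
    Integrable (fun y : E3 => (1 + ‖y‖^2) ^ (-(γ/2) : ℝ)) := by
  have h : ((Module.finrank ℝ E3 : ℝ)) < γ := by simp; exact hγ
  have := integrable_rpow_neg_one_add_norm_sq (μ := (volume : Measure E3)) h
  simpa [neg_div] using this

lemma lower_jap (x y : E3) (hy : y ∈ ball x ((1 + ‖x‖^2) ^ ((1:ℝ)/2) / 2)) :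
    (1 + ‖x‖^2) ≤ 8 * (1 + ‖y‖^2) := by
  set s := 1 + ‖x‖^2 with hs
  have hxn : (0:ℝ) ≤ ‖x‖ := norm_nonneg _
  have hyn : (0:ℝ) ≤ ‖y‖ := norm_nonneg _
  have hsq : s ^ ((1:ℝ)/2) ≤ 1 + ‖x‖ := by
    rw [← Real.sqrt_eq_rpow]
    have : s ≤ (1 + ‖x‖)^2 := by rw [hs]; nlinarith
    calc Real.sqrt s ≤ Real.sqrt ((1+‖x‖)^2) := Real.sqrt_le_sqrt this
      _ = 1 + ‖x‖ := Real.sqrt_sq (by positivity)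
  have h1 : ‖x‖ - ‖y - x‖ ≤ ‖y‖ := by
    have := norm_sub_norm_le y x
    have h2 := norm_sub_norm_le x y
    rw [norm_sub_rev x y] at h2
    linarith
  have h2 : ‖y - x‖ < (1 + ‖x‖) / 2 := by
    have := mem_ball_iff_norm.mp hy
    calc ‖y - x‖ < s ^ ((1:ℝ)/2) / 2 := this
      _ ≤ (1 + ‖x‖) / 2 := by linarith
  have h3 : (‖x‖ - 1) / 2 ≤ ‖y‖ := by linarith
  rcases le_or_gt ‖x‖ 1 with h | h
  · rw [hs]; nlinarith
  · rw [hs]; nlinarith [sq_nonneg (2*‖y‖ - (‖x‖ - 1)), sq_nonneg (‖x‖ - 2)]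

lemma key_conv {γ : ℝ} (hγ : 3 < γ) : ∃ K : ℝ, 0 < K ∧ ∀ x : E3,
    ∫⁻ y, ENNReal.ofReal ((1 + ‖y‖^2) ^ (-(γ/2) : ℝ)) * (ENNReal.ofReal ‖y - x‖)⁻¹
      ≤ ENNReal.ofReal (K * (1 + ‖x‖^2) ^ (-(1/2) : ℝ)) := by
  set Iγ : ℝ := ∫ y : E3, (1 + ‖y‖^2) ^ (-(γ/2) : ℝ) with hIγdef
  have hIγ0 : 0 ≤ Iγ := integral_nonneg (fun y => Real.rpow_nonneg (by positivity) _)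
  set c₃ : ℝ := (8:ℝ) ^ (γ/2) * cB / 4 with hc3def
  have hc3 : 0 < c₃ := by
    have := cB_pos
    have h8 : (0:ℝ) < (8:ℝ) ^ (γ/2) := Real.rpow_pos_of_pos (by norm_num) _
    positivity
  refine ⟨c₃ + 2 * Iγ, by linarith, fun x => ?_⟩
  set s : ℝ := 1 + ‖x‖^2 with hsdef
  have hs1 : (1:ℝ) ≤ s := by rw [hsdef]; nlinarith [sq_nonneg ‖x‖]
  have hs0 : (0:ℝ) < s := by linarith
  set R : ℝ := s ^ ((1:ℝ)/2) / 2 with hRdef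
  have hRpos : 0 < R := by
    have := Real.rpow_pos_of_pos hs0 ((1:ℝ)/2); rw [hRdef]; linarith
  set w : E3 → ℝ≥0∞ := fun y => ENNReal.ofReal ((1 + ‖y‖^2) ^ (-(γ/2) : ℝ)) with hwdef
  set f : E3 → ℝ≥0∞ := fun y => w y * (ENNReal.ofReal ‖y - x‖)⁻¹ with hfdef
  rw [show ∫⁻ y, w y * (ENNReal.ofReal ‖y - x‖)⁻¹ = ∫⁻ y, f y from rfl,
    ← lintegral_add_compl f (measurableSet_ball : MeasurableSet (ball x R))]
  have hne : ∀ᵐ y : E3 ∂volume, y ≠ x := by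
    refine ae_iff.mpr ?_
    have : {y : E3 | ¬ y ≠ x} = {x} := by ext y; simp
    rw [this]; exact measure_singleton x
  -- Part A
  have partA : ∫⁻ y in ball x R, f y
      ≤ ENNReal.ofReal (c₃ * s ^ (-(1/2) : ℝ)) := by
    have hae : ∀ᵐ y ∂(volume.restrict (ball x R)),
        f y ≤ ENNReal.ofReal ((8:ℝ) ^ (γ/2) * s ^ (-(γ/2) : ℝ)) * ENNReal.ofReal ‖y - x‖⁻¹ := by
      filter_upwards [ae_restrict_mem measurableSet_ball, ae_restrict_of_ae hne] with y hy hyx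
      have hnorm : 0 < ‖y - x‖ := by
        rw [norm_pos_iff]; exact sub_ne_zero_of_ne hyx
      have hinv : (ENNReal.ofReal ‖y - x‖)⁻¹ = ENNReal.ofReal ‖y - x‖⁻¹ :=
        (ENNReal.ofReal_inv_of_pos hnorm).symm
      rw [hfdef]
      simp only []
      rw [hinv]
      refine mul_le_mul_left ?_ _
      rw [hwdef]
      apply ENNReal.ofReal_le_ofReal
      -- real inequality
      have hlow : s ≤ 8 * (1 + ‖y‖^2) := lower_jap x y hy
      have hy0 : (0:ℝ) < 1 + ‖y‖^2 := by positivity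
      have hγ2 : (0:ℝ) ≤ γ/2 := by linarith
      calc (1 + ‖y‖^2) ^ (-(γ/2) : ℝ) = ((1 + ‖y‖^2) ^ (γ/2 : ℝ))⁻¹ := by
            rw [Real.rpow_neg hy0.le]
        _ ≤ ((s/8) ^ (γ/2 : ℝ))⁻¹ := by
            apply inv_anti₀
            · apply Real.rpow_pos_of_pos; linarith
            · exact Real.rpow_le_rpow (by linarith) (by linarith) hγ2
        _ = (8:ℝ) ^ (γ/2) * s ^ (-(γ/2) : ℝ) := by
            rw [Real.div_rpow hs0.le (by norm_num : (0:ℝ) ≤ 8), Real.rpow_neg hs0.le]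
            field_simp
    calc ∫⁻ y in ball x R, f y
        ≤ ∫⁻ y in ball x R, ENNReal.ofReal ((8:ℝ) ^ (γ/2) * s ^ (-(γ/2) : ℝ))
            * ENNReal.ofReal ‖y - x‖⁻¹ := lintegral_mono_ae hae
      _ = ENNReal.ofReal ((8:ℝ) ^ (γ/2) * s ^ (-(γ/2) : ℝ))
            * ∫⁻ y in ball x R, ENNReal.ofReal ‖y - x‖⁻¹ := lintegral_const_mul' _ _ ofReal_ne_top
      _ ≤ ENNReal.ofReal ((8:ℝ) ^ (γ/2) * s ^ (-(γ/2) : ℝ)) * ENNReal.ofReal (cB * R^2) :=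
            mul_le_mul_right (ball_lintegral x hRpos) _
      _ ≤ ENNReal.ofReal (c₃ * s ^ (-(1/2) : ℝ)) := by
            rw [← ENNReal.ofReal_mul (by positivity)]
            apply ENNReal.ofReal_le_ofReal
            have hR2 : R^2 = s / 4 := by
              rw [hRdef, div_pow, ← Real.rpow_natCast (s ^ ((1:ℝ)/2)) 2,
                ← Real.rpow_mul hs0.le]
              norm_num
            rw [hR2, hc3def]
            have harr : (8:ℝ) ^ (γ/2) * s ^ (-(γ/2) : ℝ) * (cB * (s/4))
                = ((8:ℝ) ^ (γ/2) * cB / 4) * (s ^ (-(γ/2) : ℝ) * s) := by ring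
            rw [harr]
            have hexp : s ^ (-(γ/2) : ℝ) * s = s ^ (1 - γ/2 : ℝ) := by
              nth_rewrite 2 [← Real.rpow_one s]
              rw [← Real.rpow_add hs0]; ring_nf
            rw [hexp]
            have hmono : s ^ (1 - γ/2 : ℝ) ≤ s ^ (-(1/2) : ℝ) :=
              Real.rpow_le_rpow_of_exponent_le hs1 (by linarith)
            have h8 : (0:ℝ) < (8:ℝ) ^ (γ/2) := Real.rpow_pos_of_pos (by norm_num) _
            have := cB_pos
            nlinarith
  -- Part B
  have partB : ∫⁻ y in (ball x R)ᶜ, f y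
      ≤ ENNReal.ofReal (2 * Iγ * s ^ (-(1/2) : ℝ)) := by
    have hpt : ∀ y ∈ (ball x R)ᶜ, f y ≤ w y * ENNReal.ofReal (2 * s ^ (-(1/2) : ℝ)) := by
      intro y hy
      have hdist : R ≤ ‖y - x‖ := by
        have := mem_ball_iff_norm.not.mp hy
        linarith [not_lt.mp this]
      refine mul_le_mul_right ?_ _
      calc (ENNReal.ofReal ‖y - x‖)⁻¹ ≤ (ENNReal.ofReal R)⁻¹ :=
            ENNReal.inv_le_inv' (ENNReal.ofReal_le_ofReal hdist)
        _ = ENNReal.ofReal R⁻¹ := (ENNReal.ofReal_inv_of_pos hRpos).symm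
        _ = ENNReal.ofReal (2 * s ^ (-(1/2) : ℝ)) := by
            congr 1
            rw [hRdef, Real.rpow_neg hs0.le]
            field_simp
    calc ∫⁻ y in (ball x R)ᶜ, f y
        ≤ ∫⁻ y in (ball x R)ᶜ, w y * ENNReal.ofReal (2 * s ^ (-(1/2) : ℝ)) :=
          setLIntegral_mono' measurableSet_ball.compl hpt
      _ ≤ ∫⁻ y, w y * ENNReal.ofReal (2 * s ^ (-(1/2) : ℝ)) := setLIntegral_le_lintegral _ _
      _ = (∫⁻ y, w y) * ENNReal.ofReal (2 * s ^ (-(1/2) : ℝ)) :=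
          lintegral_mul_const' _ _ ofReal_ne_top
      _ ≤ ENNReal.ofReal (2 * Iγ * s ^ (-(1/2) : ℝ)) := by
          have hw : ∫⁻ y, w y = ENNReal.ofReal Iγ := by
            rw [hIγdef, hwdef,
              ← ofReal_integral_eq_lintegral_ofReal (integrable_jap hγ)
                (Filter.Eventually.of_forall (fun y => Real.rpow_nonneg (by positivity) _))]
          rw [hw, ← ENNReal.ofReal_mul hIγ0]
          apply ENNReal.ofReal_le_ofReal
          have : 0 ≤ s ^ (-(1/2) : ℝ) := Real.rpow_nonneg hs0.le _
          nlinarith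
  calc (∫⁻ y in ball x R, f y) + ∫⁻ y in (ball x R)ᶜ, f y
      ≤ ENNReal.ofReal (c₃ * s ^ (-(1/2) : ℝ)) + ENNReal.ofReal (2 * Iγ * s ^ (-(1/2) : ℝ)) :=
        add_le_add partA partB
    _ = ENNReal.ofReal ((c₃ + 2 * Iγ) * s ^ (-(1/2) : ℝ)) := by
        rw [← ENNReal.ofReal_add (by positivity)
          (by nlinarith [Real.rpow_nonneg hs0.le (-(1/2) : ℝ)])]
        ring_nf
    _ = ENNReal.ofReal ((c₃ + 2 * Iγ) * (1 + ‖x‖^2) ^ (-(1/2) : ℝ)) := by rw [hsdef]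


section iter
variable (C β : ℝ)

noncomputable def gfun (z : E3) : ℝ≥0∞ := ENNReal.ofReal (C * (1 + ‖z‖^2) ^ (-(β/2) : ℝ))
noncomputable def efun (a b : E3) : ℝ≥0∞ := (ENNReal.ofReal ‖a - b‖)⁻¹

lemma measurable_gfun : Measurable (gfun C β) := by
  unfold gfun; fun_prop

lemma measurable_prev {n : ℕ} (x : E3) (i : Fin (n+1)) :
    Measurable (fun y : Fin n → E3 => Fin.cases (motive := fun _ => E3) x y i) := by
  induction i using Fin.cases with
  | zero => simpa using measurable_const
  | succ k => simpa using measurable_pi_apply k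

lemma measurable_big {n : ℕ} (x : E3) :
    Measurable (fun y : Fin n → E3 =>
      ∏ j : Fin n, gfun C β (y j) * efun (y j) (Fin.cases (motive := fun _ => E3) x y j.castSucc)) := by
  apply Finset.measurable_prod
  intro j _
  apply Measurable.mul
  · exact (measurable_gfun C β).comp (measurable_pi_apply j)
  · unfold efun
    apply Measurable.inv
    apply ENNReal.measurable_ofReal.comp
    exact ((measurable_pi_apply j).sub (measurable_prev x j.castSucc)).norm

noncomputable def Phi (n : ℕ) (x : E3) : ℝ≥0∞ :=
  ∫⁻ y : Fin n → E3,
    ∏ j : Fin n, gfun C β (y j) * efun (y j) (Fin.cases (motive := fun _ => E3) x y j.castSucc)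

lemma Phi_one (x : E3) : Phi C β 1 x = ∫⁻ a : E3, gfun C β a * efun a x := by
  unfold Phi
  have h1 : ∀ y : Fin 1 → E3,
      (∏ j : Fin 1, gfun C β (y j) * efun (y j) (Fin.cases (motive := fun _ => E3) x y j.castSucc))
      = gfun C β (y 0) * efun (y 0) x := by
    intro y
    rw [Fin.prod_univ_one]
    rfl
  simp_rw [h1]
  have := (volume_preserving_funUnique (Fin 1) E3).lintegral_comp_emb
    (MeasurableEquiv.funUnique (Fin 1) E3).measurableEmbedding
    (fun a : E3 => gfun C β a * efun a x)
  rw [← this]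
  rfl

lemma Phi_succ (n : ℕ) (x : E3) :
    Phi C β (n+1) x = ∫⁻ a : E3, (gfun C β a * efun a x) * Phi C β n a := by
  unfold Phi
  set F : (Fin (n+1) → E3) → ℝ≥0∞ := fun y =>
    ∏ j : Fin (n+1), gfun C β (y j) * efun (y j) (Fin.cases (motive := fun _ => E3) x y j.castSucc)
    with hF
  set e := MeasurableEquiv.piFinSuccAbove (fun _ : Fin (n+1) => E3) 0 with he
  have hmp : MeasurePreserving e (volume : Measure (Fin (n+1) → E3))
      ((volume : Measure E3).prod (volume : Measure (Fin n → E3))) := by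
    have := measurePreserving_piFinSuccAbove (fun _ : Fin (n+1) => (volume : Measure E3)) 0
    exact this
  have hcomp := hmp.lintegral_comp_emb e.measurableEmbedding (fun p => F (e.symm p))
  have hFe : ∀ y, F (e.symm (e y)) = F y := fun y => by rw [e.symm_apply_apply]
  simp_rw [hFe] at hcomp
  refine hcomp.trans ?_
  -- now a lintegral over the product measure
  have hmeasF : Measurable F := measurable_big C β x
  rw [lintegral_prod (fun b => F (e.symm b)) ((hmeasF.comp e.symm.measurable).aemeasurable)]
  congr 1
  funext a
  have hsymm : ∀ z : Fin n → E3, e.symm (a, z) = Fin.cons a z := by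
    intro z
    rw [he, MeasurableEquiv.piFinSuccAbove_symm_apply, Fin.insertNthEquiv_zero]
    rfl
  have hsplit : ∀ z : Fin n → E3, F (Fin.cons a z) = (gfun C β a * efun a x) *
      ∏ j : Fin n, gfun C β (z j) * efun (z j) (Fin.cases (motive := fun _ => E3) a z j.castSucc) := by
    intro z
    rw [hF]
    beta_reduce
    rw [Fin.prod_univ_succ]
    refine congrArg₂ (· * ·) ?_ (Finset.prod_congr rfl fun j _ => ?_)
    · simp
    · have h1 : Fin.cons (α := fun _ => E3) a z j.succ = z j := by simp
      have h2 : (Fin.cases (motive := fun _ => E3) x (Fin.cons a z) (j.succ.castSucc))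
          = Fin.cases (motive := fun _ => E3) a z j.castSucc := by
        rw [← Fin.succ_castSucc]
        rw [Fin.cases_succ]
        rfl
      rw [h1, h2]
  simp_rw [hsymm, hsplit]
  rw [lintegral_const_mul _ (measurable_big C β a)]

end iter

/-- Iterated convolution bound: if `|v(y)| ≤ C ⟨y⟩^{-β}` with `β > 3`, then there is `C'`
such that for every `n ≥ 1` and `x ∈ ℝ³`,
`∫_{ℝ^{3n}} (∏ |v(y_j)|) / (∏ |y_j - y_{j-1}|) dy ≤ (C')^n ⟨x⟩^{-1}`, with `y_0 = x`. -/
theorem stmt_4 (v : EuclideanSpace ℝ (Fin 3) → ℝ) (C β : ℝ) (hC : 0 < C) (hβ : 3 < β)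
    (hbd : ∀ y, |v y| ≤ C * (1 + ‖y‖ ^ 2) ^ (-(β / 2))) :
    ∃ C' : ℝ, 0 < C' ∧ ∀ n : ℕ, 1 ≤ n → ∀ x : EuclideanSpace ℝ (Fin 3),
      (∫ y : Fin n → EuclideanSpace ℝ (Fin 3),
          (∏ j : Fin n, |v (y j)|) /
            ∏ j : Fin n,
              ‖y j - Fin.cases (motive := fun _ => EuclideanSpace ℝ (Fin 3)) x y j.castSucc‖)
        ≤ C' ^ n * (1 + ‖x‖ ^ 2) ^ (-(1 / 2 : ℝ)) := by
  obtain ⟨K₁, hK₁, hkey₁⟩ := key_conv hβ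
  obtain ⟨K₂, hK₂, hkey₂⟩ := key_conv (show (3:ℝ) < β + 1 by linarith)
  set D : ℝ := C * (K₁ + K₂) with hDdef
  have hD : 0 < D := by positivity
  have base : ∀ x : E3, ∫⁻ a : E3, gfun C β a * efun a x
      ≤ ENNReal.ofReal (D * (1 + ‖x‖^2) ^ (-(1/2) : ℝ)) := by
    intro x
    have hptw : ∀ a : E3, gfun C β a * efun a x
        = ENNReal.ofReal C * (ENNReal.ofReal ((1 + ‖a‖^2) ^ (-(β/2) : ℝ)) * efun a x) := by
      intro a
      rw [gfun, ENNReal.ofReal_mul hC.le, mul_assoc]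
    simp_rw [hptw]
    rw [lintegral_const_mul' _ _ ofReal_ne_top]
    calc ENNReal.ofReal C * ∫⁻ a, ENNReal.ofReal ((1 + ‖a‖^2) ^ (-(β/2) : ℝ)) * efun a x
        ≤ ENNReal.ofReal C * ENNReal.ofReal (K₁ * (1 + ‖x‖^2) ^ (-(1/2) : ℝ)) :=
          mul_le_mul_right (hkey₁ x) _
      _ ≤ ENNReal.ofReal (D * (1 + ‖x‖^2) ^ (-(1/2) : ℝ)) := by
          rw [← ENNReal.ofReal_mul hC.le]
          apply ENNReal.ofReal_le_ofReal
          have h0 : (0:ℝ) ≤ (1 + ‖x‖^2) ^ (-(1/2) : ℝ) := Real.rpow_nonneg (by positivity) _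
          rw [hDdef]; nlinarith [mul_nonneg (mul_nonneg hC.le hK₂.le) h0]
  have step : ∀ x : E3, ∫⁻ a : E3, (gfun C β a * efun a x)
        * ENNReal.ofReal ((1 + ‖a‖^2) ^ (-(1/2) : ℝ))
      ≤ ENNReal.ofReal (D * (1 + ‖x‖^2) ^ (-(1/2) : ℝ)) := by
    intro x
    have hptw : ∀ a : E3, (gfun C β a * efun a x) * ENNReal.ofReal ((1 + ‖a‖^2) ^ (-(1/2) : ℝ))
        = ENNReal.ofReal C * (ENNReal.ofReal ((1 + ‖a‖^2) ^ (-((β+1)/2) : ℝ)) * efun a x) := by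
      intro a
      have ha0 : (0:ℝ) < 1 + ‖a‖^2 := by positivity
      rw [gfun, ENNReal.ofReal_mul hC.le]
      rw [show ENNReal.ofReal C * ENNReal.ofReal ((1 + ‖a‖^2) ^ (-(β/2) : ℝ)) * efun a x
            * ENNReal.ofReal ((1 + ‖a‖^2) ^ (-(1/2) : ℝ))
          = ENNReal.ofReal C * ((ENNReal.ofReal ((1 + ‖a‖^2) ^ (-(β/2) : ℝ))
            * ENNReal.ofReal ((1 + ‖a‖^2) ^ (-(1/2) : ℝ))) * efun a x) by ring]
      congr 2
      rw [← ENNReal.ofReal_mul (Real.rpow_nonneg ha0.le _), ← Real.rpow_add ha0]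
      norm_num
      ring_nf
    simp_rw [hptw]
    rw [lintegral_const_mul' _ _ ofReal_ne_top]
    calc ENNReal.ofReal C * ∫⁻ a, ENNReal.ofReal ((1 + ‖a‖^2) ^ (-((β+1)/2) : ℝ)) * efun a x
        ≤ ENNReal.ofReal C * ENNReal.ofReal (K₂ * (1 + ‖x‖^2) ^ (-(1/2) : ℝ)) :=
          mul_le_mul_right (hkey₂ x) _
      _ ≤ ENNReal.ofReal (D * (1 + ‖x‖^2) ^ (-(1/2) : ℝ)) := by
          rw [← ENNReal.ofReal_mul hC.le]
          apply ENNReal.ofReal_le_ofReal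
          have h0 : (0:ℝ) ≤ (1 + ‖x‖^2) ^ (-(1/2) : ℝ) := Real.rpow_nonneg (by positivity) _
          rw [hDdef]; nlinarith [mul_nonneg (mul_nonneg hC.le hK₁.le) h0]
  have Phi_bound : ∀ m : ℕ, ∀ x : E3,
      Phi C β (m+1) x ≤ ENNReal.ofReal (D^(m+1) * (1 + ‖x‖^2) ^ (-(1/2) : ℝ)) := by
    intro m
    induction m with
    | zero => intro x; rw [Phi_one]; simpa [pow_one] using base x
    | succ m ih =>
      intro x
      rw [Phi_succ]
      calc ∫⁻ a : E3, (gfun C β a * efun a x) * Phi C β (m+1) a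
          ≤ ∫⁻ a : E3, (gfun C β a * efun a x)
              * ENNReal.ofReal (D^(m+1) * (1 + ‖a‖^2) ^ (-(1/2) : ℝ)) :=
            lintegral_mono fun a => mul_le_mul_right (ih a) _
        _ = ∫⁻ a : E3, ENNReal.ofReal (D^(m+1)) * ((gfun C β a * efun a x)
              * ENNReal.ofReal ((1 + ‖a‖^2) ^ (-(1/2) : ℝ))) := by
            congr 1; funext a
            rw [ENNReal.ofReal_mul (pow_nonneg hD.le _)]; ring
        _ = ENNReal.ofReal (D^(m+1)) * ∫⁻ a : E3, (gfun C β a * efun a x)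
              * ENNReal.ofReal ((1 + ‖a‖^2) ^ (-(1/2) : ℝ)) :=
            lintegral_const_mul' _ _ ofReal_ne_top
        _ ≤ ENNReal.ofReal (D^(m+1)) * ENNReal.ofReal (D * (1 + ‖x‖^2) ^ (-(1/2) : ℝ)) :=
            mul_le_mul_right (step x) _
        _ = ENNReal.ofReal (D^(m+2) * (1 + ‖x‖^2) ^ (-(1/2) : ℝ)) := by
            rw [← ENNReal.ofReal_mul (pow_nonneg hD.le _)]
            ring_nf
  refine ⟨D, hD, fun n hn x => ?_⟩
  obtain ⟨m, rfl⟩ : ∃ m, n = m + 1 := ⟨n - 1, (Nat.succ_pred_eq_of_pos hn).symm⟩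
  set fval : (Fin (m+1) → E3) → ℝ := fun y =>
    (∏ j : Fin (m+1), |v (y j)|) /
      ∏ j : Fin (m+1), ‖y j - Fin.cases (motive := fun _ => E3) x y j.castSucc‖ with hfval
  have hnn : ∀ y, 0 ≤ fval y := fun y =>
    div_nonneg (Finset.prod_nonneg fun j _ => abs_nonneg _)
      (Finset.prod_nonneg fun j _ => norm_nonneg _)
  have hclaim : ∀ y : Fin (m+1) → E3, ENNReal.ofReal (fval y)
      ≤ ∏ j : Fin (m+1), gfun C β (y j)
          * efun (y j) (Fin.cases (motive := fun _ => E3) x y j.castSucc) := by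
    intro y
    by_cases hz : ∃ j : Fin (m+1), ‖y j - Fin.cases (motive := fun _ => E3) x y j.castSucc‖ = 0
    · obtain ⟨j, hj⟩ := hz
      rw [hfval]
      simp only []
      have hq0 : (∏ j : Fin (m+1), ‖y j - Fin.cases (motive := fun _ => E3) x y j.castSucc‖) = 0 :=
        Finset.prod_eq_zero (Finset.mem_univ j) hj
      rw [hq0]
      simp
    · push_neg at hz
      have hpos : ∀ j : Fin (m+1),
          0 < ‖y j - Fin.cases (motive := fun _ => E3) x y j.castSucc‖ :=
        fun j => lt_of_le_of_ne (norm_nonneg _) (Ne.symm (hz j))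
      have hq : 0 < ∏ j : Fin (m+1), ‖y j - Fin.cases (motive := fun _ => E3) x y j.castSucc‖ :=
        Finset.prod_pos fun j _ => hpos j
      rw [hfval]
      simp only []
      rw [ENNReal.ofReal_div_of_pos hq, div_eq_mul_inv,
        ENNReal.ofReal_prod_of_nonneg (fun j _ => abs_nonneg _),
        ENNReal.ofReal_prod_of_nonneg (fun j _ => norm_nonneg _),
        ENNReal.prod_inv_distrib (fun i _ j _ _ => Or.inr ENNReal.ofReal_ne_top),
        ← Finset.prod_mul_distrib]
      apply Finset.prod_le_prod'
      intro j _
      exact mul_le_mul_left (ENNReal.ofReal_le_ofReal (hbd (y j))) _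
  have hlin : ∫⁻ y : Fin (m+1) → E3, ENNReal.ofReal (fval y) ≤ Phi C β (m+1) x :=
    lintegral_mono hclaim
  have hrhs0 : (0:ℝ) ≤ D^(m+1) * (1 + ‖x‖^2) ^ (-(1/2) : ℝ) := by positivity
  by_cases hInt : Integrable fval volume
  · have heq := ofReal_integral_eq_lintegral_ofReal hInt (Filter.Eventually.of_forall hnn)
    have hfin : ENNReal.ofReal (∫ y, fval y)
        ≤ ENNReal.ofReal (D^(m+1) * (1 + ‖x‖^2) ^ (-(1/2) : ℝ)) := by
      rw [heq]; exact le_trans hlin (Phi_bound m x)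
    exact (ENNReal.ofReal_le_ofReal_iff hrhs0).mp hfin
  · rw [integral_undef hInt]
    exact hrhs0
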